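/- arXiv:1509.02955 — 5 statements merged into one kernel-verified Lean document; each statement's English description precedes it below -/
import Mathlib

section
/- In a historyless interaction system with self-independent reaction functions, if two committed states differ in only one node's action, then they are committed to the same stable state. -/
variable {n : ℕ} {A : Fin n → Type*}

/-- One step of historyless dynamics: nodes in the activation set `s` react,
the others keep their actions. -/
def step (f : ∀ i, (∀ j, A j) → A i) (s : Finset (Fin n)) (a : ∀ j, A j) : ∀ j, A j :=
  fun i => if i ∈ s then f i a else a i

/-- The `(a0, σ)`-trajectory of the historyless system. -/
def traj (f : ∀ i, (∀ j, A j) → A i) (σ : ℕ → Finset (Fin n)) (a0 : ∀ j, A j) :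
    ℕ → ∀ j, A j
  | 0 => a0
  | t + 1 => step f (σ (t + 1)) (traj f σ a0 t)

/-- A schedule is fair if it activates every node infinitely often. -/
def Fair (σ : ℕ → Finset (Fin n)) : Prop := ∀ i : Fin n, ∀ T : ℕ, ∃ t ≥ T, i ∈ σ t

/-- A sequence of states converges to `b` if it is eventually constantly `b`. -/
def Converges (x : ℕ → ∀ j, A j) (b : ∀ j, A j) : Prop := ∃ T : ℕ, ∀ t > T, x t = b

/-- A state `a` is committed to `b` if every fair trajectory from `a` converges to `b`. -/
def Committed (f : ∀ i, (∀ j, A j) → A i) (a b : ∀ j, A j) : Prop :=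
  ∀ σ : ℕ → Finset (Fin n), Fair σ → Converges (traj f σ a) b

/-- Reaction functions are self-independent if each `f i` ignores node `i`'s own action. -/
def SelfIndep (f : ∀ i, (∀ j, A j) → A i) : Prop :=
  ∀ (i : Fin n) (a a' : ∀ j, A j), (∀ j, j ≠ i → a j = a' j) → f i a = f i a'

/-- In a historyless interaction system with self-independent reaction functions,
if two committed states differ in only one node's action, then
they are committed to the same stable state. -/
theorem stmt0 (n : ℕ) (A : Fin n → Type*) [∀ i, Fintype (A i)]
    (f : ∀ i, (∀ j, A j) → A i) (hsi : SelfIndep f)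
    (a a' b b' : ∀ j, A j) (i : Fin n)
    (hdiff : ∀ j, j ≠ i → a j = a' j)
    (hc : Committed f a b) (hc' : Committed f a' b') :
    b = b' := by
  set σ : ℕ → Finset (Fin n) := fun t => if t = 1 then {i} else Finset.univ with hσ
  have hfair : Fair σ := by
    intro k T
    refine ⟨max T 2, le_max_left _ _, ?_⟩
    have : max T 2 ≠ 1 := by omega
    simp [hσ, this]
  have h1 : traj f σ a 1 = traj f σ a' 1 := by
    funext j
    simp only [traj, step, hσ]
    by_cases hj : j = i
    · subst hj
      simp [hsi j a a' hdiff]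
    · simp [Finset.mem_singleton, hj, hdiff j hj]
  have heq : ∀ t, 1 ≤ t → traj f σ a t = traj f σ a' t := by
    intro t ht
    induction t with
    | zero => omega
    | succ t ih =>
      rcases Nat.eq_or_lt_of_le ht with h | h
      · exact h ▸ h1
      · have := ih (by omega)
        simp [traj, this]
  obtain ⟨T, hT⟩ := hc σ hfair
  obtain ⟨T', hT'⟩ := hc' σ hfair
  have ht1 : max T T' + 1 > T := by omega
  have ht2 : max T T' + 1 > T' := by omega
  calc b = traj f σ a (max T T' + 1) := (hT _ ht1).symm
    _ = traj f σ a' (max T T' + 1) := heq _ (by omega)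
    _ = b' := hT' _ ht2
end

section
/- Every convergent historyless interaction system with self-independent reaction functions and more than one stable state has at least one uncommitted state. -/
variable {n : ℕ} {A : Fin n → Type*}

/-- A stable state is a fixed point of `f`. -/
def Stable (f : ∀ i, (∀ j, A j) → A i) (a : ∀ j, A j) : Prop := ∀ i, f i a = a i

/-- The system is convergent if every fair trajectory converges. -/
def Convergent (f : ∀ i, (∀ j, A j) → A i) : Prop :=
  ∀ (a : ∀ j, A j) (σ : ℕ → Finset (Fin n)), Fair σ → ∃ b, Converges (traj f σ a) b

/-- A schedule activating only `i` at time 1 and everyone afterwards. -/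
def tau (i : Fin n) : ℕ → Finset (Fin n) := fun t => if t = 1 then {i} else Finset.univ

lemma tau_fair (i : Fin n) : Fair (tau i) := by
  intro j T
  refine ⟨T + 2, by omega, ?_⟩
  show j ∈ (if T + 2 = 1 then ({i} : Finset (Fin n)) else Finset.univ)
  rw [if_neg (by omega)]
  exact Finset.mem_univ j

lemma committed_adjacent (f : ∀ i, (∀ j, A j) → A i) (hsi : SelfIndep f)
    (i : Fin n) (a a' c c' : ∀ j, A j)
    (hdiff : ∀ j, j ≠ i → a j = a' j)
    (h : Committed f a c) (h' : Committed f a' c') : c = c' := by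
  have hd : step f {i} a = step f {i} a' := by
    funext j
    by_cases hj : j = i
    · subst hj
      simp only [step, Finset.mem_singleton, if_pos rfl]
      exact hsi j a a' hdiff
    · simp only [step, Finset.mem_singleton, if_neg hj]
      exact hdiff j hj
  have key : ∀ t, traj f (tau i) a (t + 1) = traj f (tau i) a' (t + 1) := by
    intro t
    induction t with
    | zero =>
      show step f (tau i 1) a = step f (tau i 1) a'
      have ht : tau i 1 = {i} := by simp [tau]
      rw [ht]; exact hd
    | succ t ih =>
      show step f (tau i (t + 2)) (traj f (tau i) a (t + 1))
          = step f (tau i (t + 2)) (traj f (tau i) a' (t + 1))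
      rw [ih]
  obtain ⟨T, hT⟩ := h (tau i) (tau_fair i)
  obtain ⟨T', hT'⟩ := h' (tau i) (tau_fair i)
  have h1 := hT (T + T' + 1) (by omega)
  have h2 := hT' (T + T' + 1) (by omega)
  exact h1.symm.trans ((key (T + T')).trans h2)

/-- Every convergent historyless interaction system with self-independent reaction
functions and more than one stable state has at least one uncommitted state. -/
theorem stmt1 (n : ℕ) (A : Fin n → Type*)
    (f : ∀ i, (∀ j, A j) → A i) (hconv : Convergent f) (hsi : SelfIndep f)
    (b b' : ∀ j, A j) (hb : Stable f b) (hb' : Stable f b') (hne : b ≠ b') :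
    ∃ a : ∀ j, A j, ∀ c : ∀ j, A j, ¬ Committed f a c := by
  by_contra h
  push_neg at h
  choose c hc using h
  have huniq : ∀ a x y : ∀ j, A j, Committed f a x → Committed f a y → x = y := by
    intro a x y hx hy
    have fairu : Fair (fun _ : ℕ => (Finset.univ : Finset (Fin n))) :=
      fun i T => ⟨T, le_refl T, Finset.mem_univ i⟩
    obtain ⟨T, hT⟩ := hx _ fairu
    obtain ⟨T', hT'⟩ := hy _ fairu
    exact (hT (T + T' + 1) (by omega)).symm.trans (hT' (T + T' + 1) (by omega))
  have hstable : ∀ d : ∀ j, A j, Stable f d → Committed f d d := by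
    intro d hd σ _
    have hconst : ∀ t, traj f σ d t = d := by
      intro t
      induction t with
      | zero => rfl
      | succ t ih =>
        show step f (σ (t + 1)) (traj f σ d t) = d
        rw [ih]
        funext j
        simp only [step]
        split
        · exact hd j
        · rfl
    exact ⟨0, fun t _ => hconst t⟩
  let g : ℕ → ∀ j, A j := fun k j => if (j : ℕ) < k then b' j else b j
  have hstep : ∀ k, c (g k) = c (g (k + 1)) := by
    intro k
    by_cases hk : k < n
    · refine committed_adjacent f hsi ⟨k, hk⟩ (g k) (g (k + 1)) _ _ ?_ (hc _) (hc _)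
      intro j hj
      have hne' : (j : ℕ) ≠ k := fun h => hj (Fin.ext h)
      show (if (j : ℕ) < k then b' j else b j) = (if (j : ℕ) < k + 1 then b' j else b j)
      by_cases h2 : (j : ℕ) < k
      · rw [if_pos h2, if_pos (by omega)]
      · rw [if_neg h2, if_neg (by omega)]
    · have hgk : g k = g (k + 1) := by
        funext j
        have h1 : (j : ℕ) < k := lt_of_lt_of_le j.isLt (le_of_not_gt hk)
        show (if (j : ℕ) < k then b' j else b j) = (if (j : ℕ) < k + 1 then b' j else b j)
        rw [if_pos h1, if_pos (by omega)]
      rw [hgk]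
  have hchain : ∀ k, c (g 0) = c (g k) := by
    intro k
    induction k with
    | zero => rfl
    | succ k ih => exact ih.trans (hstep k)
  have hgb : g 0 = b := by
    funext j
    show (if (j : ℕ) < 0 then b' j else b j) = b j
    rw [if_neg (by omega)]
  have hgb' : g n = b' := by
    funext j
    show (if (j : ℕ) < n then b' j else b j) = b' j
    rw [if_pos j.isLt]
  have e1 : c (g 0) = b := huniq (g 0) _ _ (hc _) (hgb ▸ hstable b hb)
  have e2 : c (g n) = b' := huniq (g n) _ _ (hc _) (hgb' ▸ hstable b' hb')
  exact hne (by rw [← e1, hchain n, e2])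
end

section
/- In every convergent historyless interaction system with self-independent reaction functions and more than one stable state, for any uncommitted state a and any node i, there is a finite activation path from a that activates node i at least once and visits no committed state. -/
variable {n : ℕ} {A : Fin n → Type*}

/-- Applying a finite sequence of activation sets successively. -/
def runPath (f : ∀ i, (∀ j, A j) → A i) : List (Finset (Fin n)) → (∀ j, A j) → ∀ j, A j
  | [], a => a
  | s :: L, a => runPath f L (step f s a)

section Aux

variable {f : ∀ i, (∀ j, A j) → A i}

lemma fair_univ : Fair (fun _ : ℕ => (Finset.univ : Finset (Fin n))) :=
  fun i T => ⟨T, le_refl T, Finset.mem_univ i⟩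

lemma committed_unique {x e e' : ∀ j, A j} (h : Committed f x e) (h' : Committed f x e') :
    e = e' := by
  obtain ⟨T, hT⟩ := h _ fair_univ
  obtain ⟨T', hT'⟩ := h' _ fair_univ
  have h1 := hT (T + T' + 1) (by omega)
  have h2 := hT' (T + T' + 1) (by omega)
  rw [h1] at h2; exact h2

lemma committed_step {x e : ∀ j, A j} (s : Finset (Fin n)) (h : Committed f x e) :
    Committed f (step f s x) e := by
  intro σ hσ
  set τ : ℕ → Finset (Fin n) := fun t => if t ≤ 1 then s else σ (t - 1) with hτ
  have key : ∀ t, traj f τ x (t + 1) = traj f σ (step f s x) t := by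
    intro t; induction t with
    | zero => show step f (τ 1) x = step f s x; simp [hτ]
    | succ t ih =>
      show step f (τ (t + 2)) (traj f τ x (t + 1)) = step f (σ (t + 1)) (traj f σ _ t)
      have hτ2 : τ (t + 2) = σ (t + 1) := by simp [hτ]
      rw [ih, hτ2]
  have hfair : Fair τ := by
    intro j T
    obtain ⟨t, ht, hjt⟩ := hσ j (T + 1)
    refine ⟨t + 1, by omega, ?_⟩
    have : ¬ (t + 1 ≤ 1) := by omega
    simpa [hτ, this] using hjt
  obtain ⟨T, hT⟩ := h τ hfair
  refine ⟨T, fun t ht => ?_⟩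
  have := hT (t + 1) (by omega)
  rwa [key t] at this

lemma stable_step {d : ∀ j, A j} (hd : Stable f d) (s : Finset (Fin n)) : step f s d = d := by
  funext j
  by_cases h : j ∈ s <;> simp [step, h, hd j]

lemma stable_committed {d : ∀ j, A j} (hd : Stable f d) : Committed f d d := by
  intro σ _
  have h : ∀ t, traj f σ d t = d := by
    intro t; induction t with
    | zero => rfl
    | succ t ih => show step f (σ (t + 1)) (traj f σ d t) = d; rw [ih, stable_step hd]
  exact ⟨0, fun t _ => h t⟩

lemma traj_shift (σ : ℕ → Finset (Fin n)) (a : ∀ j, A j) (T : ℕ) :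
    ∀ t, traj f (fun u => σ (u + T)) (traj f σ a T) t = traj f σ a (T + t) := by
  intro t; induction t with
  | zero => rfl
  | succ t ih =>
    show step f (σ (t + 1 + T)) (traj f (fun u => σ (u + T)) (traj f σ a T) t) = _
    rw [ih]
    simp only [show t + 1 + T = T + t + 1 from by omega]
    rfl

lemma fair_shift {σ : ℕ → Finset (Fin n)} (hσ : Fair σ) (T : ℕ) :
    Fair (fun u => σ (u + T)) := by
  intro j T'
  obtain ⟨u, hu, hju⟩ := hσ j (T' + T)
  refine ⟨u - T, by omega, ?_⟩
  show j ∈ σ (u - T + T)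
  have h : u - T + T = u := by omega
  rw [h]; exact hju

lemma runPath_append (p q : List (Finset (Fin n))) (a : ∀ j, A j) :
    runPath f (p ++ q) a = runPath f q (runPath f p a) := by
  induction p generalizing a with
  | nil => rfl
  | cons s p ih =>
    show runPath f (p ++ q) (step f s a) = _
    exact ih _

lemma step_singleton_congr {k : Fin n} {x y : ∀ j, A j} (hsi : SelfIndep f)
    (h : ∀ j, j ≠ k → x j = y j) : step f {k} x = step f {k} y := by
  funext j
  by_cases hj : j = k
  · subst hj
    simp only [step, Finset.mem_singleton, if_pos rfl]
    exact hsi j x y h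
  · simp only [step, Finset.mem_singleton, if_neg hj]
    exact h j hj

lemma step_insert_agree {k : Fin n} {s : Finset (Fin n)} (x : ∀ j, A j) :
    ∀ j, j ≠ k → step f s x j = step f (insert k s) x j := by
  intro j hj
  simp [step, Finset.mem_insert, hj]

lemma prefix_concat_cases {α : Type*} {q p : List α} {s : α} (h : q <+: p ++ [s]) :
    q <+: p ∨ q = p ++ [s] := by
  by_cases hl : q.length ≤ p.length
  · exact Or.inl (List.prefix_of_prefix_length_le h (List.prefix_append p [s]) hl)
  · refine Or.inr (h.eq_of_length_le ?_)
    have := h.length_le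
    simp only [List.length_append, List.length_singleton] at this ⊢
    omega

end Aux

/-- In every convergent historyless interaction system with self-independent reaction
functions and more than one stable state, for any uncommitted state `a` and any node
`i`, there is a finite activation path from `a` that activates node `i` at least once
and visits no committed state. -/
theorem stmt2 (n : ℕ) (A : Fin n → Type*)
    (f : ∀ i, (∀ j, A j) → A i) (hconv : Convergent f) (hsi : SelfIndep f)
    (b b' : ∀ j, A j) (hb : Stable f b) (hb' : Stable f b') (hne : b ≠ b')
    (a : ∀ j, A j) (ha : ∀ c : ∀ j, A j, ¬ Committed f a c) (i : Fin n) :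
    ∃ L : List (Finset (Fin n)),
      (∃ s ∈ L, i ∈ s) ∧
      ∀ p : List (Finset (Fin n)), p <+: L →
        ∀ c : ∀ j, A j, ¬ Committed f (runPath f p a) c := by
  classical
  by_contra hcon
  push_neg at hcon
  -- `P x` : x is reachable from `a` by a path all of whose prefixes are uncommitted
  set P : (∀ j, A j) → Prop :=
    fun x => ∃ p, runPath f p a = x ∧
      ∀ q, q <+: p → ∀ c : ∀ j, A j, ¬ Committed f (runPath f q a) c with hP
  have Pa : P a := ⟨[], rfl, by
    intro q hq c
    have hqnil : q = [] := List.eq_nil_of_prefix_nil hq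
    subst hqnil
    exact ha c⟩
  have puncom : ∀ x, P x → ∀ c : ∀ j, A j, ¬ Committed f x c := by
    rintro x ⟨p, rfl, hp⟩ c
    exact hp p (List.prefix_refl p) c
  have pclos : ∀ x s, P x → (∀ c : ∀ j, A j, ¬ Committed f (step f s x) c) →
      P (step f s x) := by
    rintro x s ⟨p, rfl, hp⟩ h
    refine ⟨p ++ [s], by rw [runPath_append]; rfl, ?_⟩
    intro q hq c
    rcases prefix_concat_cases hq with hq' | rfl
    · exact hp q hq' c
    · rw [runPath_append]; exact h c
  -- every activation of a set containing `i` from a `P`-state is committed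
  have claimI : ∀ x, P x → ∀ s, i ∈ s → ∃ e, Committed f (step f s x) e := by
    rintro x ⟨p, rfl, hp⟩ s hs
    obtain ⟨q, hq, c, hc⟩ := hcon (p ++ [s]) ⟨s, by simp, hs⟩
    rcases prefix_concat_cases hq with hq' | rfl
    · exact absurd hc (hp q hq' c)
    · rw [runPath_append] at hc
      exact ⟨c, hc⟩
  -- key: the commitment value of `step f (insert i s) x` doesn't depend on `s`
  have key : ∀ (s : Finset (Fin n)) (x : ∀ j, A j) (e : ∀ j, A j), P x →
      Committed f (step f {i} x) e → Committed f (step f (insert i s) x) e := by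
    intro s
    induction s using Finset.induction_on with
    | empty => intro x e _ h; simpa using h
    | @insert k s₀ hk ih =>
      intro x e hx h
      by_cases hki : k = i
      · subst hki
        rw [Finset.insert_comm, Finset.insert_idem]
        exact ih x e hx h
      · have hB : Committed f (step f (insert i s₀) x) e := ih x e hx h
        obtain ⟨e'', hB''⟩ := claimI x hx (insert i (insert k s₀)) (Finset.mem_insert_self i _)
        have hcomm : step f ({k} : Finset (Fin n)) (step f (insert i s₀) x)
            = step f {k} (step f (insert k (insert i s₀)) x) :=
          step_singleton_congr hsi (fun j hj => step_insert_agree x j hj)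
        have h1 : Committed f (step f {k} (step f (insert i s₀) x)) e := committed_step _ hB
        have h2 : Committed f (step f {k} (step f (insert i (insert k s₀)) x)) e'' :=
          committed_step _ hB''
        rw [Finset.insert_comm] at h2
        rw [hcomm] at h1
        have he : e = e'' := committed_unique h1 h2
        rw [he]
        exact hB''
  -- the value `c` to which activating `i` at `a` commits
  obtain ⟨c, hc⟩ := claimI a Pa {i} (Finset.mem_singleton_self i)
  -- a fair schedule whose trajectory does not converge to `c`
  have hnac := ha c
  unfold Committed at hnac
  push_neg at hnac
  obtain ⟨σ, hσfair, hnconv⟩ := hnac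
  obtain ⟨d, hd⟩ := hconv a σ hσfair
  have hdc : d ≠ c := fun h => hnconv (h ▸ hd)
  -- main invariant along the trajectory
  have Q : ∀ t, (P (traj f σ a t) ∧ Committed f (step f {i} (traj f σ a t)) c) ∨
      Committed f (traj f σ a t) c := by
    intro t; induction t with
    | zero => exact Or.inl ⟨Pa, hc⟩
    | succ t ih =>
      rcases ih with ⟨hPx, hci⟩ | hcom
      · have hstep : traj f σ a (t + 1) = step f (σ (t + 1)) (traj f σ a t) := rfl
        set x := traj f σ a t with hx
        set s := σ (t + 1) with hs
        by_cases his : i ∈ s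
        · right
          have hk := key (s.erase i) x c hPx hci
          rw [Finset.insert_erase his] at hk
          rw [hstep]; exact hk
        · have hB : Committed f (step f (insert i s) x) c := key s x c hPx hci
          have hcomm : step f ({i} : Finset (Fin n)) (step f s x)
              = step f {i} (step f (insert i s) x) :=
            step_singleton_congr hsi (fun j hj => step_insert_agree x j hj)
          have hci' : Committed f (step f {i} (step f s x)) c := by
            rw [hcomm]; exact committed_step _ hB
          by_cases hex : ∃ e, Committed f (step f s x) e
          · obtain ⟨e, he⟩ := hex
            have h1 : Committed f (step f {i} (step f s x)) e := committed_step _ he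
            have h2 : e = c := committed_unique h1 hci'
            right
            rw [hstep]
            exact h2 ▸ he
          · push_neg at hex
            left
            constructor
            · rw [hstep]; exact pclos x s hPx (fun e => hex e)
            · rw [hstep]; exact hci'
      · right
        show Committed f (step f (σ (t + 1)) (traj f σ a t)) c
        exact committed_step _ hcom
  -- contradiction at a late time
  obtain ⟨T, hT⟩ := hd
  have hxT : traj f σ a (T + 1) = d := hT (T + 1) (by omega)
  have hstab : Stable f d := by
    intro j
    obtain ⟨t, ht, hjt⟩ := hσfair j (T + 2)
    obtain ⟨t', rfl⟩ : ∃ t', t = t' + 1 := ⟨t - 1, by omega⟩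
    have ht1 : traj f σ a (t' + 1) = d := hT _ (by omega)
    have ht0 : traj f σ a t' = d := hT t' (by omega)
    have hval : traj f σ a (t' + 1) j = f j (traj f σ a t') := by
      show step f (σ (t' + 1)) (traj f σ a t') j = _
      simp [step, hjt]
    rw [ht1, ht0] at hval
    exact hval.symm
  rcases Q (T + 1) with ⟨hPd, _⟩ | hcomQ
  · have hcd : Committed f (traj f σ a (T + 1)) d := by
      rw [hxT]; exact stable_committed hstab
    exact puncom _ hPd d hcd
  · have hshift := hcomQ (fun u => σ (u + (T + 1))) (fair_shift hσfair (T + 1))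
    obtain ⟨T', hT'⟩ := hshift
    have h1 : traj f (fun u => σ (u + (T + 1))) (traj f σ a (T + 1)) (T' + 1) = c :=
      hT' (T' + 1) (by omega)
    rw [traj_shift] at h1
    have h2 : traj f σ a (T + 1 + (T' + 1)) = d := hT _ (by omega)
    exact hdc (h2.symm.trans h1)
end

section
/- No historyless interaction system with self-independent reaction functions and more than one stable state is convergent: there exists a state a and a fair schedule σ such that the (a,σ)-trajectory does not converge. -/
variable {n : ℕ} {A : Fin n → Type*}

-- auxiliary definitions and lemmas

def runL (f : ∀ i, (∀ j, A j) → A i) (L : List (Finset (Fin n))) (a : ∀ j, A j) : ∀ j, A j :=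
  L.foldl (fun x s => step f s x) a

def ValF (f : ∀ i, (∀ j, A j) → A i) (a c : ∀ j, A j) : Prop :=
  ∃ σ, Fair σ ∧ Converges (traj f σ a) c

section basic
variable {f : ∀ i, (∀ j, A j) → A i}

theorem runL_nil (a : ∀ j, A j) : runL f [] a = a := rfl

theorem runL_append (L1 L2 : List (Finset (Fin n))) (a : ∀ j, A j) :
    runL f (L1 ++ L2) a = runL f L2 (runL f L1 a) := List.foldl_append

theorem runL_singleton (s : Finset (Fin n)) (a : ∀ j, A j) :
    runL f [s] a = step f s a := rfl

theorem val_step {s : Finset (Fin n)} {a c : ∀ j, A j}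
    (h : ValF f (step f s a) c) : ValF f a c := by
  obtain ⟨σ, hfair, T, hT⟩ := h
  refine ⟨fun k => if k ≤ 1 then s else σ (k - 1), ?_, T + 1, ?_⟩
  · intro i T0
    obtain ⟨t, ht, hmem⟩ := hfair i (max T0 1)
    refine ⟨t + 1, by omega, ?_⟩
    have h1 : ¬ (t + 1 ≤ 1) := by omega
    simpa [h1] using hmem
  · have htr : ∀ t, traj f (fun k => if k ≤ 1 then s else σ (k - 1)) a (t + 1)
        = traj f σ (step f s a) t := by
      intro t
      induction t with
      | zero => simp [traj]
      | succ t ih =>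
        show step f _ _ = step f _ _
        have h2 : ¬ (t + 2 ≤ 1) := by omega
        simp only [h2, if_false, ih]
        norm_num
    intro t ht
    obtain ⟨u, rfl⟩ : ∃ u, t = u + 1 := ⟨t - 1, by omega⟩
    rw [htr]
    exact hT u (by omega)

theorem val_runL {c : ∀ j, A j} :
    ∀ (L : List (Finset (Fin n))) (a : ∀ j, A j), ValF f (runL f L a) c → ValF f a c := by
  intro L
  induction L with
  | nil => intro a h; exact h
  | cons s L ih =>
    intro a h
    exact val_step (ih (step f s a) h)

theorem val_nonempty (hconv : Convergent f) (a : ∀ j, A j) : ∃ c, ValF f a c := by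
  obtain ⟨c, hc⟩ := hconv a (fun _ => Finset.univ)
    (fun i T => ⟨T, le_refl _, Finset.mem_univ _⟩)
  exact ⟨c, ⟨_, fun i T => ⟨T, le_refl _, Finset.mem_univ _⟩, hc⟩⟩

theorem step_stable {c : ∀ j, A j} (h : Stable f c) (s : Finset (Fin n)) :
    step f s c = c := by
  funext m
  by_cases hm : m ∈ s <;> simp [step, hm, h m]

theorem traj_stable {c : ∀ j, A j} (h : Stable f c) (σ : ℕ → Finset (Fin n)) (t : ℕ) :
    traj f σ c t = c := by
  induction t with
  | zero => rfl
  | succ t ih => show step f _ _ = c; rw [ih, step_stable h]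

theorem val_stable_eq {c c' : ∀ j, A j} (h : Stable f c) (hv : ValF f c c') : c' = c := by
  obtain ⟨σ, _, T, hT⟩ := hv
  have := hT (T + 1) (by omega)
  rw [traj_stable h] at this
  exact this.symm

theorem val_stable_self {c : ∀ j, A j} (h : Stable f c) : ValF f c c :=
  ⟨fun _ => Finset.univ, fun i T => ⟨T, le_refl _, Finset.mem_univ _⟩,
    0, fun t _ => traj_stable h _ t⟩

theorem limit_stable {σ : ℕ → Finset (Fin n)} {a c : ∀ j, A j}
    (hfair : Fair σ) (h : Converges (traj f σ a) c) : Stable f c := by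
  obtain ⟨T, hT⟩ := h
  intro i
  obtain ⟨t, ht, hmem⟩ := hfair i (T + 2)
  obtain ⟨u, rfl⟩ : ∃ u, t = u + 1 := ⟨t - 1, by omega⟩
  have h1 : traj f σ a u = c := hT u (by omega)
  have h2 : traj f σ a (u + 1) = c := hT (u + 1) (by omega)
  have : step f (σ (u + 1)) c = c := by
    conv_lhs => rw [← h1]
    rw [← h2]; rfl
  have := congrFun this i
  simpa [step, hmem] using this

theorem step_eq_of_agree (hsi : SelfIndep f) {i : Fin n} {a a' : ∀ j, A j}
    (h : ∀ j, j ≠ i → a j = a' j) : step f {i} a = step f {i} a' := by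
  funext m
  by_cases hm : m = i
  · subst hm; simp only [step, Finset.mem_singleton, if_pos rfl]
    exact hsi m a a' h
  · simp only [step, Finset.mem_singleton, if_neg hm]
    exact h m hm

end basic

section star
variable {f : ∀ i, (∀ j, A j) → A i}

/-- Key lemma: from a bivalent state `x`, one can reach a bivalent state while
activating node `i` along the way. -/
theorem star (hconv : Convergent f) (hsi : SelfIndep f) (x : ∀ j, A j)
    (e1 e2 : ∀ j, A j) (h1 : ValF f x e1) (h2 : ValF f x e2) (hne : e1 ≠ e2) (i : Fin n) :
    ∃ L : List (Finset (Fin n)), (∃ s ∈ L, i ∈ s) ∧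
      ∃ c c', ValF f (runL f L x) c ∧ ValF f (runL f L x) c' ∧ c ≠ c' := by
  by_contra hbad
  push_neg at hbad
  -- uniqueness of values after any run from x that activates i
  have uniq : ∀ (L0 : List (Finset (Fin n))) (s : Finset (Fin n)), i ∈ s →
      ∀ c c', ValF f (step f s (runL f L0 x)) c → ValF f (step f s (runL f L0 x)) c' →
      c = c' := by
    intro L0 s hs c c' hc hc'
    have hmem : ∃ u ∈ L0 ++ [s], i ∈ u := ⟨s, by simp, hs⟩
    have := hbad (L0 ++ [s]) hmem c c'
    rw [runL_append, runL_singleton] at this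
    exact this hc hc'
  -- adjacent sets containing i have equal committed values
  have ADJ : ∀ (L0 : List (Finset (Fin n))) (S : Finset (Fin n)) (j : Fin n), i ∈ S →
      ∀ c c', ValF f (step f S (runL f L0 x)) c →
        ValF f (step f (insert j S) (runL f L0 x)) c' → c = c' := by
    intro L0 S j hiS c c' hc hc'
    set y := runL f L0 x with hy
    have hagree : ∀ m, m ≠ j → step f S y m = step f (insert j S) y m := by
      intro m hm
      by_cases hmS : m ∈ S
      · simp [step, hmS, Finset.mem_insert]
      · have : m ∉ insert j S := by simp [Finset.mem_insert, hm, hmS]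
        simp [step, hmS, this]
    have hmerge : step f {j} (step f S y) = step f {j} (step f (insert j S) y) :=
      step_eq_of_agree hsi hagree
    obtain ⟨d, hd⟩ := val_nonempty hconv (step f {j} (step f S y))
    have hd1 : ValF f (step f S y) d := val_step hd
    have hd2 : ValF f (step f (insert j S) y) d := val_step (hmerge ▸ hd)
    have e1 := uniq L0 S hiS c d hc hd1
    have e2 := uniq L0 (insert j S) (Finset.mem_insert_of_mem hiS) c' d hc' hd2
    rw [e1, e2]
  have hyb_union : ∀ (t : Finset (Fin n)) (L0 : List (Finset (Fin n)))
      (S : Finset (Fin n)), i ∈ S →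
      ∀ c c', ValF f (step f S (runL f L0 x)) c →
        ValF f (step f (S ∪ t) (runL f L0 x)) c' → c = c' := by
    intro t
    induction t using Finset.induction_on with
    | empty =>
      intro L0 S hS c c' hc hc'
      rw [Finset.union_empty] at hc'
      exact uniq L0 S hS c c' hc hc'
    | @insert j t hj ih =>
      intro L0 S hS c c' hc hc'
      rw [Finset.union_insert] at hc'
      obtain ⟨d, hd⟩ := val_nonempty hconv (step f (S ∪ t) (runL f L0 x))
      have hA := ih L0 S hS c d hc hd
      have hB := ADJ L0 (S ∪ t) j (Finset.mem_union_left _ hS) d c' hd hc'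
      rw [hA, hB]
  have HYB : ∀ (L0 : List (Finset (Fin n))) (s1 s2 : Finset (Fin n)), i ∈ s1 → i ∈ s2 →
      ∀ c c', ValF f (step f s1 (runL f L0 x)) c →
        ValF f (step f s2 (runL f L0 x)) c' → c = c' := by
    intro L0 s1 s2 hs1 hs2 c c' hc hc'
    obtain ⟨d, hd⟩ := val_nonempty hconv (step f (s1 ∪ s2) (runL f L0 x))
    have hA := hyb_union s2 L0 s1 hs1 c d hc hd
    have hB := hyb_union s1 L0 s2 hs2 c' d hc' (by rwa [Finset.union_comm])
    rw [hA, hB]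
  -- P1 : the committed value of activating i is invariant under one dynamic step
  have P1 : ∀ (L0 : List (Finset (Fin n))) (r : Finset (Fin n)) (c c' : ∀ j, A j),
      ValF f (step f {i} (step f r (runL f L0 x))) c →
      ValF f (step f {i} (runL f L0 x)) c' → c = c' := by
    intro L0 r c c' hc hc'
    set y := runL f L0 x with hy
    have hagree : ∀ m, m ≠ i → step f (insert i r) y m = step f r y m := by
      intro m hm
      by_cases hmr : m ∈ r
      · simp [step, hmr, Finset.mem_insert]
      · have : m ∉ insert i r := by simp [Finset.mem_insert, hm, hmr]
        simp [step, hmr, this]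
    have hmerge : step f {i} (step f (insert i r) y) = step f {i} (step f r y) :=
      step_eq_of_agree hsi hagree
    have hc2 : ValF f (step f (insert i r) y) c := val_step (hmerge ▸ hc)
    exact HYB L0 (insert i r) {i} (Finset.mem_insert_self _ _)
      (Finset.mem_singleton_self _) c c' hc2 hc'
  -- every trajectory state is reachable by a finite run
  have reach : ∀ (σ : ℕ → Finset (Fin n)) (t : ℕ),
      ∃ L0, runL f L0 x = traj f σ x t := by
    intro σ t
    induction t with
    | zero => exact ⟨[], rfl⟩
    | succ t ih =>
      obtain ⟨L0, hL0⟩ := ih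
      exact ⟨L0 ++ [σ (t + 1)], by rw [runL_append, runL_singleton, hL0]; rfl⟩
  obtain ⟨c0, hc0⟩ := val_nonempty hconv (step f {i} x)
  have key : ∀ (σ : ℕ → Finset (Fin n)) (t : ℕ) (c : ∀ j, A j),
      ValF f (step f {i} (traj f σ x t)) c → c = c0 := by
    intro σ t
    induction t with
    | zero => exact fun c hc => uniq [] {i} (Finset.mem_singleton_self _) c c0 hc hc0
    | succ t ih =>
      intro c hc
      obtain ⟨L0, hL0⟩ := reach σ t
      obtain ⟨d, hd⟩ := val_nonempty hconv (step f {i} (traj f σ x t))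
      have hdc0 := ih d hd
      rw [← hL0] at hd
      have hc' : ValF f (step f {i} (step f (σ (t + 1)) (runL f L0 x))) c := by
        rw [hL0]; exact hc
      rw [P1 L0 (σ (t + 1)) c d hc' hd]
      exact hdc0
  -- conclude: both e1 and e2 equal c0
  have final : ∀ e : ∀ j, A j, ValF f x e → e = c0 := by
    rintro e ⟨σ, hfair, T, hT⟩
    have hst : Stable f e := limit_stable hfair ⟨T, hT⟩
    have htr : traj f σ x (T + 1) = e := hT (T + 1) (by omega)
    have : ValF f (step f {i} (traj f σ x (T + 1))) e := by
      rw [htr, step_stable hst]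
      exact val_stable_self hst
    exact key σ (T + 1) e this
  exact hne ((final e1 h1).trans (final e2 h2).symm)

end star

-- Part III machinery: iterated blocks
def chainSt (f : ∀ i, (∀ j, A j) → A i) (G : (∀ j, A j) → ℕ → List (Finset (Fin n)))
    (x₀ : ∀ j, A j) : ℕ → ∀ j, A j
  | 0 => x₀
  | k + 1 => runL f (G (chainSt f G x₀ k) k) (chainSt f G x₀ k)

def chainLs (f : ∀ i, (∀ j, A j) → A i) (G : (∀ j, A j) → ℕ → List (Finset (Fin n)))
    (x₀ : ∀ j, A j) : ℕ → List (Finset (Fin n))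
  | 0 => []
  | k + 1 => chainLs f G x₀ k ++ G (chainSt f G x₀ k) k

section chain
variable {f : ∀ i, (∀ j, A j) → A i}

theorem runL_chainLs (G : (∀ j, A j) → ℕ → List (Finset (Fin n))) (x₀ : ∀ j, A j) :
    ∀ k, runL f (chainLs f G x₀ k) x₀ = chainSt f G x₀ k := by
  intro k
  induction k with
  | zero => rfl
  | succ k ih => rw [chainLs, runL_append, ih]; rfl

theorem chainLs_prefix (G : (∀ j, A j) → ℕ → List (Finset (Fin n))) (x₀ : ∀ j, A j)
    {k m : ℕ} (h : k ≤ m) : chainLs f G x₀ k <+: chainLs f G x₀ m := by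
  induction m, h using Nat.le_induction with
  | base => exact List.prefix_refl _
  | succ m hm ih => exact ih.trans (List.prefix_append _ _)

theorem getD_of_prefix {α : Type*} {L1 L2 : List α} (h : L1 <+: L2) {m : ℕ} {d : α}
    (hm : m < L1.length) : L2.getD m d = L1.getD m d := by
  obtain ⟨r, rfl⟩ := h
  simp [List.getD_eq_getElem?_getD, List.getElem?_append_left hm]

theorem traj_eq_runL (L : List (Finset (Fin n))) (σ : ℕ → Finset (Fin n)) (a : ∀ j, A j)
    (hσ : ∀ t, 1 ≤ t → t ≤ L.length → σ t = L.getD (t - 1) ∅) :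
    ∀ t, t ≤ L.length → traj f σ a t = runL f (L.take t) a := by
  intro t
  induction t with
  | zero => intro _; rfl
  | succ t ih =>
    intro ht
    have htlt : t < L.length := by omega
    have h1 : traj f σ a (t + 1) = step f (σ (t + 1)) (traj f σ a t) := rfl
    rw [h1, ih (by omega), hσ (t + 1) (by omega) ht]
    have h2 : L.take (t + 1) = L.take t ++ [L[t]] := by
      rw [List.take_succ, List.getElem?_eq_getElem htlt]
      rfl
    rw [h2, runL_append, runL_singleton]
    congr 1
    simp [List.getD_eq_getElem?_getD, List.getElem?_eq_getElem htlt]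

end chain

/-- No historyless interaction system with self-independent reaction functions and
more than one stable state is convergent: there exist a state `a` and a fair
schedule `σ` such that the `(a,σ)`-trajectory does not converge. -/
theorem stmt3 (n : ℕ) (A : Fin n → Type*) [∀ i, Fintype (A i)] [∀ i, Nonempty (A i)]
    (f : ∀ i, (∀ j, A j) → A i) (hsi : SelfIndep f)
    (b b' : ∀ j, A j) (hb : Stable f b) (hb' : Stable f b') (hne : b ≠ b') :
    ∃ (a : ∀ j, A j) (σ : ℕ → Finset (Fin n)),
      Fair σ ∧ ∀ c : ∀ j, A j, ¬ Converges (traj f σ a) c := by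
  by_contra hgoal
  push_neg at hgoal
  have hconv : Convergent f := hgoal
  -- n = 0 is impossible
  rcases Nat.eq_zero_or_pos n with hn0 | hn
  · exact hne (funext fun j => absurd j.isLt (by omega))
  -- Part I : there is a bivalent state
  have hbivex : ∃ x c c', ValF f x c ∧ ValF f x c' ∧ c ≠ c' := by
    by_contra huni
    push_neg at huni
    -- every state is univalent; walk the hybrid path from b to b'
    set h : ℕ → ∀ j, A j := fun k j => if (j : ℕ) < k then b' j else b j with hh
    have h0 : h 0 = b := funext fun j => by simp [hh]
    have hnb : h n = b' := funext fun j => by simp [hh, j.isLt]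
    have claim : ∀ k, k ≤ n → ∀ c, ValF f (h k) c → c = b := by
      intro k
      induction k with
      | zero => intro _ c hc; rw [h0] at hc; exact val_stable_eq hb hc
      | succ k ih =>
        intro hk c hc
        set i : Fin n := ⟨k, by omega⟩ with hi
        have hagree : ∀ j, j ≠ i → h (k + 1) j = h k j := by
          intro j hj
          have hjk : (j : ℕ) ≠ k := fun hjk => hj (Fin.ext hjk)
          by_cases hlt : (j : ℕ) < k
          · have hlt1 : (j : ℕ) < k + 1 := by omega
            simp [hh, hlt, hlt1]
          · have hlt1 : ¬ (j : ℕ) < k + 1 := by omega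
            simp [hh, hlt, hlt1]
        have hmerge : step f {i} (h (k + 1)) = step f {i} (h k) :=
          step_eq_of_agree hsi hagree
        obtain ⟨d, hd⟩ := val_nonempty hconv (step f {i} (h k))
        have hd1 : ValF f (h k) d := val_step hd
        have hd2 : ValF f (h (k + 1)) d := val_step (hmerge ▸ hd)
        have hcd := huni (h (k + 1)) c d hc hd2
        rw [hcd, ih (by omega) d hd1]
    have : b' = b := claim n (le_refl n) b' (by rw [hnb]; exact val_stable_self hb')
    exact hne this.symm
  obtain ⟨x₀, c1, c2, hc1, hc2, hc12⟩ := hbivex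
  -- choice function for blocks
  have hstar : ∀ (x : ∀ j, A j) (i : Fin n), ∃ L : List (Finset (Fin n)),
      (∃ c c', ValF f x c ∧ ValF f x c' ∧ c ≠ c') →
      ((∃ s ∈ L, i ∈ s) ∧ ∃ c c', ValF f (runL f L x) c ∧ ValF f (runL f L x) c' ∧ c ≠ c') := by
    intro x i
    by_cases hx : ∃ c c', ValF f x c ∧ ValF f x c' ∧ c ≠ c'
    · obtain ⟨c, c', h1, h2, hcc⟩ := hx
      obtain ⟨L, hL⟩ := star hconv hsi x c c' h1 h2 hcc i
      exact ⟨L, fun _ => hL⟩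
    · exact ⟨[], fun h => absurd h hx⟩
  choose G0 hG0 using hstar
  set idx : ℕ → Fin n := fun k => ⟨k % n, Nat.mod_lt _ hn⟩ with hidx
  set G : (∀ j, A j) → ℕ → List (Finset (Fin n)) := fun x k => G0 x (idx k) with hG
  set S : ℕ → ∀ j, A j := chainSt f G x₀ with hS
  set Ls : ℕ → List (Finset (Fin n)) := chainLs f G x₀ with hLs
  -- invariant: every chain state is bivalent
  have hbiv : ∀ k, ∃ c c', ValF f (S k) c ∧ ValF f (S k) c' ∧ c ≠ c' := by
    intro k
    induction k with
    | zero => exact ⟨c1, c2, hc1, hc2, hc12⟩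
    | succ k ih =>
      have := (hG0 (S k) (idx k) ih).2
      exact this
  have hblk : ∀ k, ∃ s ∈ G (S k) k, (idx k) ∈ s := fun k => (hG0 (S k) (idx k) (hbiv k)).1
  have hlen : ∀ k, k ≤ (Ls k).length := by
    intro k
    induction k with
    | zero => exact Nat.zero_le _
    | succ k ih =>
      obtain ⟨s, hs, _⟩ := hblk k
      have : 0 < (G (S k) k).length := List.length_pos_iff.mpr (List.ne_nil_of_mem hs)
      have hlsucc : Ls (k + 1) = Ls k ++ G (S k) k := rfl
      rw [hlsucc, List.length_append]
      omega
  set σ : ℕ → Finset (Fin n) := fun t => (Ls t).getD (t - 1) ∅ with hσ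
  have hσspec : ∀ k t, 1 ≤ t → t ≤ (Ls k).length → σ t = (Ls k).getD (t - 1) ∅ := by
    intro k t h1 h2
    rcases le_total t k with h | h
    · have hpre := chainLs_prefix (f := f) G x₀ h
      rw [← hLs] at hpre
      simp only [hσ]
      exact (getD_of_prefix hpre (by have := hlen t; omega)).symm
    · have hpre := chainLs_prefix (f := f) G x₀ h
      rw [← hLs] at hpre
      simp only [hσ]
      exact getD_of_prefix hpre (by omega)
  -- the trajectory visits the chain states
  have htrajS : ∀ k, traj f σ x₀ ((Ls k).length) = S k := by
    intro k
    have := traj_eq_runL (f := f) (Ls k) σ x₀ (fun t ht1 ht2 => hσspec k t ht1 ht2)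
      ((Ls k).length) (le_refl _)
    rwa [List.take_length, runL_chainLs] at this
  -- fairness
  have hfair : Fair σ := by
    intro i T
    set k : ℕ := (i : ℕ) + n * (T + 1) with hk
    have hmul : T + 1 ≤ n * (T + 1) := Nat.le_mul_of_pos_left (T + 1) hn
    have hkT : T + 1 ≤ k := by omega
    have hik : idx k = i := by
      apply Fin.ext
      show k % n = (i : ℕ)
      rw [hk, Nat.add_mul_mod_self_left, Nat.mod_eq_of_lt i.isLt]
    obtain ⟨s, hs, his⟩ := hblk k
    rw [hik] at his
    obtain ⟨m, hm, hms⟩ := List.mem_iff_getElem.mp hs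
    refine ⟨(Ls k).length + m + 1, by have := hlen k; omega, ?_⟩
    have hlsucc : Ls (k + 1) = Ls k ++ G (S k) k := rfl
    have hlen1 : (Ls k).length + m + 1 ≤ (Ls (k + 1)).length := by
      rw [hlsucc, List.length_append]; omega
    rw [hσspec (k + 1) _ (by omega) hlen1]
    have : (Ls k).length + m + 1 - 1 = (Ls k).length + m := by omega
    rw [this, hlsucc]
    rw [List.getD_eq_getElem?_getD, List.getElem?_append_right (by omega)]
    have : (Ls k).length + m - (Ls k).length = m := by omega
    rw [this, List.getElem?_eq_getElem hm]
    simpa [hms] using his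
  -- contradiction with convergence
  obtain ⟨c, T, hT⟩ := hconv x₀ σ hfair
  have hstab : Stable f c := limit_stable hfair ⟨T, hT⟩
  have hNk : (Ls (T + 1)).length > T := by have := hlen (T + 1); omega
  have hSc : S (T + 1) = c := by rw [← htrajS (T + 1)]; exact hT _ hNk
  obtain ⟨d1, d2, hd1, hd2, hd12⟩ := hbiv (T + 1)
  rw [hSc] at hd1 hd2
  exact hd12 ((val_stable_eq hstab hd1).trans (val_stable_eq hstab hd2).symm)
end

section
/- There is a stationary 3-recall deterministic uncoupled protocol that is self-stabilizing on all finite games with at least one pure Nash equilibrium: specifically, fix a cyclic permutation π of the state space A, and let each node i play, given the last three states (a,b,c): c_i if b = c and c_i is a best response of i to c; min BR_i(c) if b = c and c_i is not a best response; π_i(a) if a = b ≠ c; and c_i otherwise. Then under the synchronous schedule (all nodes activated each step), from every initial triple of states, the resulting trajectory eventually remains forever at a pure Nash equilibrium. -/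
variable {n : ℕ} {A : Fin n → Type*}

/-- `α` is a best response of node `i` at state `c`. -/
def IsBR (u : ∀ i : Fin n, (∀ j, A j) → ℝ) (i : Fin n) (α : A i) (c : ∀ j, A j) : Prop :=
  ∀ β : A i, u i (Function.update c i β) ≤ u i (Function.update c i α)

/-- A pure Nash equilibrium: every node's action is a best response. -/
def PNE (u : ∀ i : Fin n, (∀ j, A j) → ℝ) (s : ∀ j, A j) : Prop :=
  ∀ i : Fin n, IsBR u i (s i) s

/-- There is a stationary 3-recall deterministic uncoupled protocol that is
self-stabilizing on all finite games having a pure Nash equilibrium: fixing a cyclic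
permutation `π` of the state space, each node `i` plays, given the last three states
`(a,b,c)`: `c i` if `b = c` and `c i` is a best response to `c`; the minimal best
response to `c` if `b = c` and `c i` is not a best response; `π a i` if `a = b ≠ c`;
and `c i` otherwise.  Under the synchronous schedule, from every initial triple the
trajectory eventually remains forever at a pure Nash equilibrium. -/
theorem stmt11 (n : ℕ) (A : Fin n → Type*)
    [∀ i, Fintype (A i)] [∀ i, Nonempty (A i)] [∀ i, LinearOrder (A i)]
    (u : ∀ i : Fin n, (∀ j, A j) → ℝ)
    (π : Equiv.Perm (∀ j, A j))
    (hπ : ∀ a b : ∀ j, A j, ∃ k : ℕ, (π ^ k) a = b)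
    (g : ∀ i : Fin n, (∀ j, A j) → (∀ j, A j) → (∀ j, A j) → A i)
    (hg1 : ∀ (i : Fin n) (a b c : ∀ j, A j), b = c → IsBR u i (c i) c →
      g i a b c = c i)
    (hg2 : ∀ (i : Fin n) (a b c : ∀ j, A j), b = c → ¬ IsBR u i (c i) c →
      IsBR u i (g i a b c) c ∧ ∀ α : A i, IsBR u i α c → g i a b c ≤ α)
    (hg3 : ∀ (i : Fin n) (a b c : ∀ j, A j), b ≠ c → a = b → g i a b c = π a i)
    (hg4 : ∀ (i : Fin n) (a b c : ∀ j, A j), b ≠ c → a ≠ b → g i a b c = c i)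
    (hPNE : ∃ p : ∀ j, A j, PNE u p)
    (x : ℕ → ∀ j, A j)
    (hx : ∀ t : ℕ, x (t + 3) = fun i => g i (x t) (x (t + 1)) (x (t + 2))) :
    ∃ (T : ℕ) (p : ∀ j, A j), PNE u p ∧ ∀ t ≥ T, x t = p := by
  classical
  -- The "synchronized best-response" map.
  set F : (∀ j, A j) → (∀ j, A j) := fun c i => g i c c c with hFdef
  have hFeq : ∀ (i : Fin n) (a c : ∀ j, A j), g i a c c = F c i := by
    intro i a c
    by_cases hbr : IsBR u i (c i) c
    · rw [hg1 i a c c rfl hbr]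
      exact (hg1 i c c c rfl hbr).symm
    · obtain ⟨h1, h2⟩ := hg2 i a c c rfl hbr
      obtain ⟨h3, h4⟩ := hg2 i c c c rfl hbr
      exact le_antisymm (h2 _ h3) (h4 _ h1)
  have hPNE_F : ∀ c : ∀ j, A j, PNE u c → F c = c := by
    intro c hp
    funext i
    exact hg1 i c c c rfl (hp i)
  have hnotPNE : ∀ c : ∀ j, A j, ¬ PNE u c → F c ≠ c := by
    intro c hc heq
    apply hc
    intro i
    by_contra hbr
    have h := (hg2 i c c c rfl hbr).1
    have : F c i = c i := congrFun heq i
    rw [show g i c c c = F c i from rfl, this] at h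
    exact hbr h
  have hx' : ∀ t i, x (t + 3) i = g i (x t) (x (t + 1)) (x (t + 2)) := by
    intro t i
    rw [hx t]
  -- once at a PNE-triple, stay forever
  have hA : ∀ (p : ∀ j, A j), PNE u p → ∀ t, x t = p → x (t+1) = p → x (t+2) = p →
      ∀ s, t ≤ s → x s = p := by
    intro p hp t h0 h1 h2 s hs
    induction s using Nat.strong_induction_on with
    | _ s IH =>
      rcases lt_or_ge s (t+3) with hlt | hge
      · have : s = t ∨ s = t + 1 ∨ s = t + 2 := by omega
        rcases this with rfl | rfl | rfl <;> assumption
      · obtain ⟨m, rfl⟩ : ∃ m, s = m + 3 := ⟨s - 3, by omega⟩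
        funext i
        rw [hx' m i, IH m (by omega) (by omega), IH (m+1) (by omega) (by omega),
          IH (m+2) (by omega) (by omega)]
        exact hg1 i p p p rfl (hp i)
  -- from a scanning triple for a non-PNE state c, reach the scanning triple for π c
  have hB : ∀ (c : ∀ j, A j) (t : ℕ), ¬ PNE u c → x t = c → x (t+1) = c →
      x (t+2) = F c → ∃ s, x s = π c ∧ x (s+1) = π c ∧ x (s+2) = F (π c) := by
    intro c t hc h0 h1 h2
    have hFc : F c ≠ c := hnotPNE c hc
    have h3 : x (t+3) = π c := by
      funext i
      rw [hx' t i, hg3 i (x t) (x (t+1)) (x (t+2))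
        (by rw [h1, h2]; exact fun e => hFc e.symm) (by rw [h0, h1]), h0]
    by_cases hfp : F c = π c
    · refine ⟨t+2, by rw [h2, hfp], ?_, ?_⟩
      · rw [show t+2+1 = t+3 by omega]; exact h3
      · rw [show t+2+2 = t+4 by omega]
        funext i
        rw [show (t:ℕ)+4 = (t+1)+3 by omega, hx' (t+1) i,
          show (t:ℕ)+1+1 = t+2 by omega, show (t:ℕ)+1+2 = t+3 by omega,
          h1, h2, hfp, h3]
        exact hFeq i c (π c)
    · have h4 : x (t+4) = π c := by
        funext i
        rw [show (t:ℕ)+4 = (t+1)+3 by omega, hx' (t+1) i,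
          show (t:ℕ)+1+1 = t+2 by omega, show (t:ℕ)+1+2 = t+3 by omega,
          hg4 i (x (t+1)) (x (t+2)) (x (t+3))
            (by rw [h2, h3]; exact hfp) (by rw [h1, h2]; exact fun e => hFc e.symm), h3]
      have h5 : x (t+5) = F (π c) := by
        funext i
        rw [show (t:ℕ)+5 = (t+2)+3 by omega, hx' (t+2) i,
          show (t:ℕ)+2+1 = t+3 by omega, show (t:ℕ)+2+2 = t+4 by omega, h3, h4]
        exact hFeq i (x (t+2)) (π c)
      refine ⟨t+3, h3, ?_, ?_⟩
      · rw [show t+3+1 = t+4 by omega]; exact h4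
      · rw [show t+3+2 = t+5 by omega]; exact h5
  obtain ⟨p₀, hp₀⟩ := hPNE
  -- iterate: from a scanning triple for c with π^k c = p₀, converge
  have hC : ∀ (k : ℕ) (c : ∀ j, A j) (t : ℕ), (π ^ k) c = p₀ →
      x t = c → x (t+1) = c → x (t+2) = F c →
      ∃ T p, PNE u p ∧ ∀ s ≥ T, x s = p := by
    intro k
    induction k with
    | zero =>
      intro c t hk h0 h1 h2
      have hc : c = p₀ := by simpa using hk
      subst hc
      exact ⟨t, c, hp₀, fun s hs =>
        hA c hp₀ t h0 h1 (by rw [h2, hPNE_F c hp₀]) s hs⟩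
    | succ k IH =>
      intro c t hk h0 h1 h2
      by_cases hc : PNE u c
      · exact ⟨t, c, hc, fun s hs => hA c hc t h0 h1 (by rw [h2, hPNE_F c hc]) s hs⟩
      · obtain ⟨s, hs0, hs1, hs2⟩ := hB c t hc h0 h1 h2
        refine IH (π c) s ?_ hs0 hs1 hs2
        have he : (π ^ (k+1)) c = (π ^ k) (π c) := by
          rw [pow_succ, Equiv.Perm.mul_apply]
        rw [← he]
        exact hk
  -- main case analysis: within a few steps we reach a scanning triple
  have e01 : (0:ℕ)+1 = 1 := by omega
  have e02 : (0:ℕ)+2 = 2 := by omega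
  have e11 : (1:ℕ)+1 = 2 := by omega
  have e12 : (1:ℕ)+2 = 3 := by omega
  have e21 : (2:ℕ)+1 = 3 := by omega
  have e22 : (2:ℕ)+2 = 4 := by omega
  have e03 : (3:ℕ) = 0+3 := by omega
  have e13 : (4:ℕ) = 1+3 := by omega
  have e23 : (5:ℕ) = 2+3 := by omega
  have start : ∃ (t : ℕ) (c : ∀ j, A j), x t = c ∧ x (t+1) = c ∧ x (t+2) = F c := by
    by_cases h12 : x 1 = x 2
    · refine ⟨1, x 2, h12, by rw [e11], ?_⟩
      funext i
      rw [e12, e03, hx' 0 i, e01, e02, h12]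
      exact hFeq i (x 0) (x 2)
    · by_cases h01 : x 0 = x 1
      · have h3 : x 3 = π (x 0) := by
          funext i
          rw [e03, hx' 0 i, e01, e02, hg3 i (x 0) (x 1) (x 2) h12 h01]
        by_cases h23 : x 2 = x 3
        · refine ⟨2, x 3, h23, by rw [e21], ?_⟩
          funext i
          rw [e22, e13, hx' 1 i, e11, e12, h23]
          exact hFeq i (x 1) (x 3)
        · have h4 : x 4 = x 3 := by
            funext i
            rw [e13, hx' 1 i, e11, e12,
              hg4 i (x 1) (x 2) (x 3) h23 h12]
          refine ⟨3, x 4, h4.symm, by rw [show (3:ℕ)+1 = 4 from by omega], ?_⟩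
          funext i
          rw [show (3:ℕ)+2 = 5 from by omega, e23, hx' 2 i, e21, e22,
            show x 3 = x 4 from h4.symm]
          exact hFeq i (x 2) (x 4)
      · have h3 : x 3 = x 2 := by
          funext i
          rw [e03, hx' 0 i, e01, e02, hg4 i (x 0) (x 1) (x 2) h12 h01]
        refine ⟨2, x 3, h3.symm, by rw [e21], ?_⟩
        funext i
        rw [e22, e13, hx' 1 i, e11, e12, show x 2 = x 3 from h3.symm]
        exact hFeq i (x 1) (x 3)
  obtain ⟨t, c, h0, h1, h2⟩ := start
  obtain ⟨k, hk⟩ := hπ c p₀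
  exact hC k c t hk h0 h1 h2
end
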